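/- Let F be a field, n ≥ 1, S an infinite sequence over F, and s = S|n = S_0,…,S_{1-n}. Let f_1 ∈ F[x] be nonzero with deg f_1 ≤ n, and set x f_2 = [f_1 · S̄] (the strictly positive-degree part of f_1·S̄). Then [f_1 · S̄] = [f_1 · s̄], and (f_1, f_2) is a solution for s (i.e., f_1 annihilates s with x f_2 = [f_1 · s̄]) if and only if v(f_1 · S̄ − x f_2) ≤ deg f_1 − n, where v is the exponential valuation on F((x^{-1})) (v(L) is the largest index with nonzero coefficient, v(0) = −∞). -/

import Mathlib

open Polynomial HahnSeries in
/-- Polynomial part of a Laurent series in `x⁻¹` (the series variable is `x⁻¹`,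
so the coefficient of `xᵏ` is the coefficient at exponent `-k`). -/
noncomputable def polPart {F : Type*} [Field F] (L : LaurentSeries F) : Polynomial F :=
  ∑ k ∈ Finset.range ((-L.order).toNat + 1), Polynomial.C (L.coeff (-(k : ℤ))) * Polynomial.X ^ k

/-- Embedding of polynomials in `x` into Laurent series in `x⁻¹`. -/
noncomputable def toL {F : Type*} [Field F] (p : Polynomial F) : LaurentSeries F :=
  ∑ k ∈ Finset.range (p.natDegree + 1), HahnSeries.single (-(k : ℤ)) (p.coeff k)

/-- Generating function `S̄ = Σ_{i ≤ 0} S_i xⁱ` of an infinite sequence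
(`S k` denotes `S₋ₖ`), as a Laurent series in `x⁻¹`. -/
noncomputable def sbar {F : Type*} [Field F] (S : ℕ → F) : LaurentSeries F :=
  HahnSeries.ofPowerSeries ℤ F (PowerSeries.mk S)

/-- The remainders `b_i` of the continued-fraction algorithm for `S̄` (junk `0` after it stops). -/
noncomputable def cfB {F : Type*} [Field F] (S : ℕ → F) : ℕ → LaurentSeries F
  | 0 => HahnSeries.single 1 1 * sbar S
  | (i + 1) => (cfB S i)⁻¹ - toL (polPart (cfB S i)⁻¹)

/-- `cfA S i` is the partial-quotient polynomial `a_{i+1}`. -/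
noncomputable def cfA {F : Type*} [Field F] (S : ℕ → F) (i : ℕ) : Polynomial F :=
  polPart (cfB S i)⁻¹

/-- `cfQ S i = (q^{(i-1)}, q^{(i)})`, the consecutive partial quotients of `S̄`,
with `q^{(-1)} = (0,1)`, `q^{(0)} = (1,0)`, `q^{(i+1)} = a_{i+1} q^{(i)} + q^{(i-1)}`. -/
noncomputable def cfQ {F : Type*} [Field F] (S : ℕ → F) :
    ℕ → (Polynomial F × Polynomial F) × (Polynomial F × Polynomial F)
  | 0 => ((0, 1), (1, 0))
  | (i + 1) => ((cfQ S i).2,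
      (cfA S i * (cfQ S i).2.1 + (cfQ S i).1.1,
       cfA S i * (cfQ S i).2.2 + (cfQ S i).1.2))

/-- `vLE L m` : the exponential valuation of `L` (largest `x`-degree) is `≤ m`. -/
def vLE {F : Type*} [Field F] (L : LaurentSeries F) (m : ℤ) : Prop :=
  ∀ i : ℤ, m < i → L.coeff (-i) = 0

/-- `IsPosPart L g` : `x·g = [L]`, the strictly-positive `x`-degree part of `L`. -/
def IsPosPart {F : Type*} [Field F] (L : LaurentSeries F) (g : Polynomial F) : Prop :=
  ∀ k : ℕ, g.coeff k = L.coeff (-(k + 1 : ℤ))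
open Polynomial in
/-- φ of degree d satisfies the annihilating condition for the length-`n` sequence
`s₀, s₋₁, …, s₁₋ₙ` (where `s k` denotes `s₋ₖ`). -/
def AnnCond {D : Type*} [CommRing D] (n : ℕ) (s : ℕ → D) (φ : Polynomial D) : Prop :=
  ∀ t : ℕ, t + φ.natDegree + 1 ≤ n →
    ∑ j ∈ Finset.range (φ.natDegree + 1), φ.coeff j * s (t + j) = 0

/-- φ is a nonzero annihilating polynomial of the length-`n` sequence `s`. -/
def Annihilates {D : Type*} [CommRing D] (n : ℕ) (s : ℕ → D) (φ : Polynomial D) : Prop :=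
  φ ≠ 0 ∧ AnnCond n s φ

/-- Linear complexity: minimal degree of a nonzero annihilating polynomial. -/
noncomputable def LC {D : Type*} [CommRing D] (n : ℕ) (s : ℕ → D) : ℕ :=
  sInf {d | ∃ φ : Polynomial D, Annihilates n s φ ∧ φ.natDegree = d}

/-- `x·ψ = [φ·s̄]`, the strictly-positive-degree part of `φ·s̄`, expressed coefficientwise. -/
def SeqNum {D : Type*} [CommRing D] (n : ℕ) (s : ℕ → D) (φ ψ : Polynomial D) : Prop :=
  ∀ k : ℕ, ψ.coeff k = ∑ j ∈ Finset.range (φ.natDegree + 1),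
    if k + 1 ≤ j ∧ j - (k + 1) < n then φ.coeff j * s (j - (k + 1)) else 0

/-- `(φ, ψ)` is a solution for the length-`n` sequence `s`. -/
def IsSolution {D : Type*} [CommRing D] (n : ℕ) (s : ℕ → D) (φ ψ : Polynomial D) : Prop :=
  Annihilates n s φ ∧ SeqNum n s φ ψ


lemma coeff_sbar {F : Type*} [Field F] (S : ℕ → F) (e : ℤ) :
    (sbar S).coeff e = if 0 ≤ e then S e.toNat else 0 := by
  rcases le_or_gt 0 e with he | he
  · lift e to ℕ using he
    simp [sbar, HahnSeries.ofPowerSeries_apply_coeff]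
  · rw [if_neg (not_le.2 he)]
    rw [sbar, HahnSeries.ofPowerSeries_apply]
    apply HahnSeries.embDomain_notin_range
    rintro ⟨m, hm⟩
    simp at hm
    omega

lemma coeff_toL {F : Type*} [Field F] (p : Polynomial F) (e : ℤ) :
    (toL p).coeff e = if e ≤ 0 then p.coeff (-e).toNat else 0 := by
  rw [toL]; simp only [← HahnSeries.coeff.addMonoidHom_apply, map_sum]
  simp only [HahnSeries.coeff.addMonoidHom_apply, HahnSeries.coeff_single]
  rcases le_or_gt e 0 with he | he
  · rw [if_pos he]
    rcases le_or_gt ((-e).toNat) p.natDegree with hle | hlt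
    · rw [Finset.sum_eq_single ((-e).toNat)]
      · rw [if_pos (by omega)]
      · intro b _ hb
        rw [if_neg (by omega)]
      · intro h; exact absurd (Finset.mem_range.2 (by omega)) h
    · rw [Finset.sum_eq_zero, Polynomial.coeff_eq_zero_of_natDegree_lt hlt]
      intro b hb
      rw [Finset.mem_range] at hb
      rw [if_neg (by omega)]
  · rw [if_neg (not_le.2 he), Finset.sum_eq_zero]
    intro b _
    rw [if_neg (by omega)]

lemma coeff_toL_mul {F : Type*} [Field F] (p : Polynomial F) (L : LaurentSeries F) (e : ℤ) :
    (toL p * L).coeff e = ∑ k ∈ Finset.range (p.natDegree + 1),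
      p.coeff k * L.coeff (e + k) := by
  rw [toL, Finset.sum_mul]; simp only [← HahnSeries.coeff.addMonoidHom_apply, map_sum]
  simp only [HahnSeries.coeff.addMonoidHom_apply]
  refine Finset.sum_congr rfl fun k _ => ?_
  have h : (HahnSeries.single (-(k:ℤ)) (p.coeff k) * L).coeff ((e + k) + (-(k:ℤ)))
      = p.coeff k * L.coeff (e + k) := HahnSeries.coeff_single_mul_add
  simpa using h

lemma coeff_mul_sbar {F : Type*} [Field F] (p : Polynomial F) (S : ℕ → F) (e : ℤ) :
    (toL p * sbar S).coeff e = ∑ k ∈ Finset.range (p.natDegree + 1),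
      if 0 ≤ e + k then p.coeff k * S (e + k).toNat else 0 := by
  rw [coeff_toL_mul]
  refine Finset.sum_congr rfl fun k _ => ?_
  rw [coeff_sbar]
  split_ifs with h
  · rfl
  · rw [mul_zero]

open Polynomial in
/-- For `f₁ ≠ 0` with `deg f₁ ≤ n` and `x f₂ = [f₁·S̄]`: the positive parts
`[f₁·S̄]` and `[f₁·s̄]` agree (`s = S|n`), and `(f₁, f₂)` is a solution for `s`
iff `v(f₁·S̄ − x f₂) ≤ deg f₁ − n`. -/
theorem solution_iff_valuation_bound {F : Type*} [Field F] (n : ℕ) (hn : 1 ≤ n)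
    (S : ℕ → F) (f₁ f₂ : Polynomial F) (hf₁ : f₁ ≠ 0) (hdeg : f₁.natDegree ≤ n)
    (hf₂ : IsPosPart (toL f₁ * sbar S) f₂) :
    IsPosPart (toL f₁ * sbar (fun k => if k < n then S k else 0)) f₂ ∧
      (IsSolution n S f₁ f₂ ↔
        vLE (toL f₁ * sbar S - toL (X * f₂)) ((f₁.natDegree : ℤ) - n)) := by
  set d := f₁.natDegree with hd
  have part1 : IsPosPart (toL f₁ * sbar (fun k => if k < n then S k else 0)) f₂ := by
    intro k
    rw [hf₂ k, coeff_mul_sbar, coeff_mul_sbar]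
    refine Finset.sum_congr rfl fun j hj => ?_
    rw [Finset.mem_range] at hj
    split_ifs with h h2
    · rfl
    · exact absurd (show (-(↑k + 1) + (↑j : ℤ)).toNat < n by omega) h2
    · rfl
  have seqnum : SeqNum n S f₁ f₂ := by
    intro k
    rw [hf₂ k, coeff_mul_sbar]
    refine Finset.sum_congr rfl fun j hj => ?_
    rw [Finset.mem_range] at hj
    by_cases h : k + 1 ≤ j
    · rw [if_pos (by omega), if_pos ⟨h, by omega⟩]
      have he : (-(↑k + 1) + (↑j : ℤ)).toNat = j - (k + 1) := by omega
      rw [he]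
    · rw [if_neg (by omega), if_neg (by tauto)]
  have key : ∀ i : ℤ, (toL f₁ * sbar S - toL (Polynomial.X * f₂)).coeff (-i) =
      if i ≤ 0 then ∑ j ∈ Finset.range (d + 1), f₁.coeff j * S ((-i).toNat + j) else 0 := by
    intro i
    rcases le_or_gt i 0 with hi | hi
    · rw [if_pos hi, HahnSeries.coeff_sub, coeff_mul_sbar]
      have hsub : (toL (Polynomial.X * f₂)).coeff (-i) = 0 := by
        rw [coeff_toL]
        split_ifs with h
        · have : (-(-i)).toNat = 0 := by omega
          rw [this, Polynomial.mul_coeff_zero, Polynomial.coeff_X_zero, zero_mul]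
        · rfl
      rw [hsub, sub_zero]
      refine Finset.sum_congr rfl fun j hj => ?_
      rw [if_pos (by omega)]
      congr 2
      omega
    · rw [if_neg (by omega), HahnSeries.coeff_sub]
      set m := i.toNat - 1 with hm
      have h1 : (toL (Polynomial.X * f₂)).coeff (-i) = f₂.coeff m := by
        rw [coeff_toL, if_pos (by omega)]
        have : (-(-i)).toNat = m + 1 := by omega
        rw [this, Polynomial.coeff_X_mul]
      rw [h1, hf₂ m]
      have : (-((m : ℤ) + 1)) = -i := by omega
      rw [this, sub_self]
  refine ⟨part1, ?_⟩
  constructor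
  · rintro ⟨⟨-, hann⟩, -⟩ i hi
    rw [key i]
    split_ifs with h
    · exact hann ((-i).toNat) (by omega)
    · rfl
  · intro hv
    refine ⟨⟨hf₁, ?_⟩, seqnum⟩
    intro t ht
    have h := hv (-(t : ℤ)) (by omega)
    rw [key, if_pos (by omega)] at h
    simpa using h
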